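/- arXiv:2011.07769 — 2 statements merged into one kernel-verified Lean document; each statement's English description precedes it below -/
import Mathlib

section
/- Let A ∈ ℝ^{N×N} be an irreducible SDDM matrix (hence invertible), let b ∈ ℝ^N, and let x = A⁻¹b. Let à ∈ ℝ^{(N+1)×(N+1)} be the extended matrix à = [[A, −A𝟏], [−𝟏ᵀA, 𝟏ᵀA𝟏]]. Then a vector y ∈ ℝ^{N+1} satisfies à y = (b; −𝟏ᵀb) if and only if y = (x; 0) + c·𝟏_{N+1} for some c ∈ ℝ, where 𝟏_{N+1} ∈ ℝ^{N+1} is the all-ones vector. In particular, solving the irreducible SDDM system Ax = b is equivalent to solving this irreducible Laplacian system. -/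
open Matrix Finset

/-- A symmetric matrix is irreducible if there is no nonempty proper subset `S` of the index
set with `A i j = 0` for all `i ∈ S` and `j ∉ S`. -/
def IsIrreducibleMat {N : ℕ} (A : Matrix (Fin N) (Fin N) ℝ) : Prop :=
  ¬ ∃ S : Set (Fin N), S.Nonempty ∧ S ≠ Set.univ ∧ ∀ i ∈ S, ∀ j ∉ S, A i j = 0

/-- `A` is symmetric diagonally dominant: `A = Aᵀ` and `a_ii ≥ ∑_{j ≠ i} |a_ij|`. -/
def IsSDD {N : ℕ} (A : Matrix (Fin N) (Fin N) ℝ) : Prop :=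
  A.IsSymm ∧ ∀ i, ∑ j ∈ Finset.univ.filter (· ≠ i), |A i j| ≤ A i i

/-- `A` is an SDDM matrix: SDD, positive definite, and non-positive off-diagonal entries. -/
def IsSDDM {N : ℕ} (A : Matrix (Fin N) (Fin N) ℝ) : Prop :=
  IsSDD A ∧ A.PosDef ∧ ∀ i j, i ≠ j → A i j ≤ 0

/-- The extended matrix `Ã = [[A, −A𝟏], [−𝟏ᵀA, 𝟏ᵀA𝟏]] ∈ ℝ^{(N+1)×(N+1)}`. -/
noncomputable def extendMat {N : ℕ} (A : Matrix (Fin N) (Fin N) ℝ) :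
    Matrix (Fin (N + 1)) (Fin (N + 1)) ℝ :=
  Matrix.of fun i j =>
    if hi : (i : ℕ) < N then
      if hj : (j : ℕ) < N then A ⟨i, hi⟩ ⟨j, hj⟩
      else -∑ m, A ⟨i, hi⟩ m
    else
      if hj : (j : ℕ) < N then -∑ m, A m ⟨j, hj⟩
      else ∑ m, ∑ l, A m l

lemma extendMat_cc {N : ℕ} (A : Matrix (Fin N) (Fin N) ℝ) (i j : Fin N) :
    extendMat A i.castSucc j.castSucc = A i j := by
  simp [extendMat, i.isLt, j.isLt]

lemma extendMat_cl {N : ℕ} (A : Matrix (Fin N) (Fin N) ℝ) (i : Fin N) :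
    extendMat A i.castSucc (Fin.last N) = -∑ m, A i m := by
  simp [extendMat, i.isLt]

lemma extendMat_lc {N : ℕ} (A : Matrix (Fin N) (Fin N) ℝ) (j : Fin N) :
    extendMat A (Fin.last N) j.castSucc = -∑ m, A m j := by
  simp [extendMat, j.isLt]

lemma extendMat_ll {N : ℕ} (A : Matrix (Fin N) (Fin N) ℝ) :
    extendMat A (Fin.last N) (Fin.last N) = ∑ m, ∑ l, A m l := by
  simp [extendMat]

lemma mulVec_extend {N : ℕ} (A : Matrix (Fin N) (Fin N) ℝ) (y : Fin (N+1) → ℝ) :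
    extendMat A *ᵥ y =
      Fin.snoc (A *ᵥ (fun i => y i.castSucc - y (Fin.last N)))
        (-∑ i, (A *ᵥ (fun i => y i.castSucc - y (Fin.last N))) i) := by
  funext k
  induction k using Fin.lastCases with
  | last =>
    simp only [mulVec, dotProduct, Fin.snoc_last, Fin.sum_univ_castSucc,
      extendMat_lc, extendMat_ll, mul_sub, Finset.sum_sub_distrib, neg_mul,
      Finset.sum_neg_distrib]
    rw [Finset.sum_comm (s := univ) (t := univ) (f := fun m l => A m l * y l.castSucc)]
    simp [Finset.sum_mul, Finset.mul_sum]
    ring_nf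
    simp_rw [mul_comm (y (Fin.last N))]
  | cast i =>
    simp only [mulVec, dotProduct, Fin.snoc_castSucc, Fin.sum_univ_castSucc,
      extendMat_cc, extendMat_cl, mul_sub, Finset.sum_sub_distrib, neg_mul,
      Finset.mul_sum, Finset.sum_mul]
    ring_nf
    simp_rw [mul_comm (y (Fin.last N))]

/-- Solving the irreducible SDDM system `A x = b` is equivalent to solving the extended
irreducible Laplacian system: `Ã y = (b; −𝟏ᵀb)` iff `y = (A⁻¹b; 0) + c·𝟏` for some `c`. -/
theorem extended_system_solutions {N : ℕ} (A : Matrix (Fin N) (Fin N) ℝ)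
    (hA : IsSDDM A) (hirr : IsIrreducibleMat A) (b : Fin N → ℝ)
    (y : Fin (N + 1) → ℝ) :
    extendMat A *ᵥ y = Fin.snoc b (-∑ i, b i) ↔
      ∃ c : ℝ, y = Fin.snoc (A⁻¹ *ᵥ b) 0 + Function.const (Fin (N + 1)) c := by
  have hdet : IsUnit A.det := isUnit_iff_ne_zero.mpr (ne_of_gt hA.2.1.det_pos)
  set w : Fin N → ℝ := fun i => y i.castSucc - y (Fin.last N) with hwdef
  constructor
  · intro h
    rw [mulVec_extend] at h
    have h1 : A *ᵥ w = b := by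
      funext i
      have := congrFun h i.castSucc
      simpa using this
    have hw : w = A⁻¹ *ᵥ b := by
      rw [← h1, mulVec_mulVec, Matrix.nonsing_inv_mul A hdet, one_mulVec]
    refine ⟨y (Fin.last N), ?_⟩
    funext k
    induction k using Fin.lastCases with
    | last => simp
    | cast i =>
      have := congrFun hw i
      simp only [hwdef] at this
      simp [Pi.add_apply, Fin.snoc_castSucc, Function.const_apply]
      linarith
  · rintro ⟨c, rfl⟩
    rw [mulVec_extend]
    have hw : w = A⁻¹ *ᵥ b := by
      funext i
      simp [hwdef]
    have h1 : A *ᵥ w = b := by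
      rw [hw, mulVec_mulVec, Matrix.mul_nonsing_inv A hdet, one_mulVec]
    rw [← hwdef, h1]
end

section
/- Let A ∈ ℝ^{N×N} be a nonsingular irreducible SDD matrix with at least one positive off-diagonal entry, write A = A_d + A_n + A_p where A_d, A_n, A_p contain the diagonal, negative off-diagonal, and positive off-diagonal entries of A, respectively, and let à ∈ ℝ^{2N×2N} be the block matrix à = [[A_d + A_n, −A_p], [−A_p, A_d + A_n]]. Then à is SDD with all off-diagonal entries non-positive; and if a_ii = ∑_{j≠i} |a_ij| for every i, then for any b ∈ ℝ^N and any y = (x₁; −x₂) ∈ ℝ^{2N} satisfying à y = (b; −b), one has x₁ + x₂ = 2A⁻¹b and x₁ − x₂ ∈ span{𝟏}; consequently the solution set of à y = (b; −b) is { (x; −x) + c·𝟏_{2N} : c ∈ ℝ } with x = A⁻¹b, and (x; −x) is the unique solution orthogonal to the all-ones vector 𝟏_{2N}. -/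
open Matrix Finset

/-- The diagonal part `A_d` of `A`. -/
def Adiag {N : ℕ} (A : Matrix (Fin N) (Fin N) ℝ) : Matrix (Fin N) (Fin N) ℝ :=
  Matrix.of fun i j => if i = j then A i j else 0

/-- The negative off-diagonal part `A_n` of `A`. -/
noncomputable def Aneg {N : ℕ} (A : Matrix (Fin N) (Fin N) ℝ) : Matrix (Fin N) (Fin N) ℝ :=
  Matrix.of fun i j => if i = j then 0 else min (A i j) 0

/-- The positive off-diagonal part `A_p` of `A`. -/
noncomputable def Apos {N : ℕ} (A : Matrix (Fin N) (Fin N) ℝ) : Matrix (Fin N) (Fin N) ℝ :=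
  Matrix.of fun i j => if i = j then 0 else max (A i j) 0

/-- The extended matrix `Ã = [[A_d + A_n, −A_p], [−A_p, A_d + A_n]] ∈ ℝ^{2N×2N}`. -/
noncomputable def tildeMat {N : ℕ} (A : Matrix (Fin N) (Fin N) ℝ) :
    Matrix (Fin N ⊕ Fin N) (Fin N ⊕ Fin N) ℝ :=
  Matrix.fromBlocks (Adiag A + Aneg A) (-(Apos A)) (-(Apos A)) (Adiag A + Aneg A)




lemma abs_min_add_abs_max (a : ℝ) : |min a 0| + |max a 0| = |a| := by
  rcases le_total a 0 with h | h
  · simp [min_eq_left h, max_eq_right h, abs_of_nonpos h]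
  · simp [min_eq_right h, max_eq_left h, abs_of_nonneg h]

lemma min_sub_max (a : ℝ) : min a 0 - max a 0 = -|a| := by
  rcases le_total a 0 with h | h
  · simp [min_eq_left h, max_eq_right h, abs_of_nonpos h]
  · simp [min_eq_right h, max_eq_left h, abs_of_nonneg h]

lemma decompX {N : ℕ} (A : Matrix (Fin N) (Fin N) ℝ) :
    Adiag A + Aneg A + Apos A = A := by
  ext i j
  by_cases h : i = j <;> simp [Adiag, Aneg, Apos, h, min_add_max]

noncomputable def MmatX {N : ℕ} (A : Matrix (Fin N) (Fin N) ℝ) : Matrix (Fin N) (Fin N) ℝ :=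
  Adiag A + Aneg A - Apos A

lemma MmatX_apply {N : ℕ} (A : Matrix (Fin N) (Fin N) ℝ) (i j : Fin N) :
    MmatX A i j = if i = j then A i i else -|A i j| := by
  by_cases h : i = j <;> simp [MmatX, Adiag, Aneg, Apos, h, min_sub_max]

lemma MmatX_erase_sum {N : ℕ} (A : Matrix (Fin N) (Fin N) ℝ) (i : Fin N) (f : Fin N → ℝ) :
    ∑ j ∈ Finset.univ.erase i, MmatX A i j * f j
      = -∑ j ∈ Finset.univ.erase i, |A i j| * f j := by
  rw [← Finset.sum_neg_distrib]
  apply Finset.sum_congr rfl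
  intro k hk
  rw [MmatX_apply, if_neg (by simp at hk; exact fun h => hk (h ▸ rfl))]
  ring

lemma hAii_erase {N : ℕ} (A : Matrix (Fin N) (Fin N) ℝ)
    (hEq : ∀ i, A i i = ∑ j ∈ Finset.univ.filter (· ≠ i), |A i j|) (i : Fin N) :
    A i i = ∑ j ∈ Finset.univ.erase i, |A i j| := by
  rw [hEq i, Finset.filter_ne']

lemma MmatX_row {N : ℕ} (A : Matrix (Fin N) (Fin N) ℝ) (x : Fin N → ℝ) (i : Fin N) :
    (MmatX A *ᵥ x) i = A i i * x i - ∑ j ∈ Finset.univ.erase i, |A i j| * x j := by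
  simp only [Matrix.mulVec, dotProduct]
  rw [← Finset.sum_erase_add _ _ (Finset.mem_univ i), MmatX_erase_sum,
    MmatX_apply, if_pos rfl]
  ring

lemma MmatX_const {N : ℕ} (A : Matrix (Fin N) (Fin N) ℝ)
    (hEq : ∀ i, A i i = ∑ j ∈ Finset.univ.filter (· ≠ i), |A i j|) (c : ℝ) :
    MmatX A *ᵥ Function.const (Fin N) c = 0 := by
  funext i
  rw [Pi.zero_apply, MmatX_row, hAii_erase A hEq i, Finset.sum_mul]
  simp [Function.const]

lemma MmatX_ker {N : ℕ} (A : Matrix (Fin N) (Fin N) ℝ) (hN : Nonempty (Fin N))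
    (hirr : ¬ ∃ S : Set (Fin N), S.Nonempty ∧ S ≠ Set.univ ∧ ∀ i ∈ S, ∀ j ∉ S, A i j = 0)
    (hEq : ∀ i, A i i = ∑ j ∈ Finset.univ.filter (· ≠ i), |A i j|)
    (x : Fin N → ℝ) (hx : MmatX A *ᵥ x = 0) :
    ∃ c : ℝ, x = Function.const (Fin N) c := by
  obtain ⟨i₀, hi₀⟩ := Finite.exists_max x
  set m := x i₀ with hm
  have key : ∀ i, x i = m → ∀ j, A i j ≠ 0 → x j = m := by
    intro i him j hAij
    have hrow : A i i * x i - ∑ j ∈ Finset.univ.erase i, |A i j| * x j = 0 := by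
      rw [← MmatX_row, hx, Pi.zero_apply]
    have hsum : ∑ j ∈ Finset.univ.erase i, |A i j| * (m - x j) = 0 := by
      calc ∑ j ∈ Finset.univ.erase i, |A i j| * (m - x j)
          = (∑ j ∈ Finset.univ.erase i, |A i j|) * m
            - ∑ j ∈ Finset.univ.erase i, |A i j| * x j := by
            rw [Finset.sum_mul, ← Finset.sum_sub_distrib]
            apply Finset.sum_congr rfl; intro k _; ring
        _ = 0 := by rw [← hAii_erase A hEq i]; rw [him] at hrow; linarith
    have hterm := (Finset.sum_eq_zero_iff_of_nonneg (fun k _ =>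
      mul_nonneg (abs_nonneg _) (by linarith [hi₀ k]))).mp hsum
    rcases eq_or_ne j i with rfl | hji
    · exact him
    · have := hterm j (Finset.mem_erase.mpr ⟨hji, Finset.mem_univ j⟩)
      rcases mul_eq_zero.mp this with h | h
      · exact absurd (abs_eq_zero.mp h) hAij
      · linarith
  by_cases hS : {j | x j = m} = Set.univ
  · exact ⟨m, funext fun j => Set.eq_univ_iff_forall.mp hS j⟩
  · exact absurd ⟨{j | x j = m}, ⟨i₀, hm.symm⟩, hS,
      fun i hi j hj => by_contra fun hA0 => hj (key i hi j hA0)⟩ hirr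



lemma sum_elim_eq_iff {α β γ : Type*} {a c : α → γ} {b d : β → γ} :
    Sum.elim a b = Sum.elim c d ↔ a = c ∧ b = d := by
  constructor
  · intro h
    exact ⟨funext fun i => congrFun h (Sum.inl i), funext fun i => congrFun h (Sum.inr i)⟩
  · rintro ⟨rfl, rfl⟩; rfl

lemma system_iff {N : ℕ} (A : Matrix (Fin N) (Fin N) ℝ) (u v b : Fin N → ℝ) :
    tildeMat A *ᵥ Sum.elim u v = Sum.elim b (-b) ↔
      (A *ᵥ (u - v) = (2 : ℝ) • b ∧ MmatX A *ᵥ (u + v) = 0) := by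
  set Q := Adiag A + Aneg A with hQ
  set P := Apos A with hP
  have hAw : ∀ w, A *ᵥ w = Q *ᵥ w + P *ᵥ w := fun w => by
    rw [← decompX A, Matrix.add_mulVec]
  have hMw : ∀ w, MmatX A *ᵥ w = Q *ᵥ w - P *ᵥ w := fun w => by
    rw [MmatX, Matrix.sub_mulVec]
  rw [tildeMat, Matrix.fromBlocks_mulVec]
  simp only [Sum.elim_comp_inl, Sum.elim_comp_inr, Matrix.neg_mulVec]
  rw [sum_elim_eq_iff]
  constructor
  · rintro ⟨h1, h2⟩
    constructor
    · funext i
      have e1 := congrFun h1 i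
      have e2 := congrFun h2 i
      have e3 := congrFun (hAw (u - v)) i
      simp only [Pi.add_apply, Pi.sub_apply, Pi.neg_apply, Pi.smul_apply, smul_eq_mul,
        Matrix.mulVec_sub, Matrix.mulVec_add] at e1 e2 e3 ⊢
      linarith
    · funext i
      have e1 := congrFun h1 i
      have e2 := congrFun h2 i
      have e3 := congrFun (hMw (u + v)) i
      simp only [Pi.add_apply, Pi.sub_apply, Pi.neg_apply, Pi.zero_apply,
        Matrix.mulVec_sub, Matrix.mulVec_add] at e1 e2 e3 ⊢
      linarith
  · rintro ⟨h1, h2⟩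
    have e3 := hAw (u - v)
    have e4 := hMw (u + v)
    rw [h1] at e3
    rw [h2] at e4
    constructor
    · funext i
      have a3 := congrFun e3 i
      have a4 := congrFun e4 i
      simp only [Pi.add_apply, Pi.sub_apply, Pi.neg_apply, Pi.smul_apply, Pi.zero_apply,
        smul_eq_mul, Matrix.mulVec_sub, Matrix.mulVec_add] at a3 a4 ⊢
      linarith
    · funext i
      have a3 := congrFun e3 i
      have a4 := congrFun e4 i
      simp only [Pi.add_apply, Pi.sub_apply, Pi.neg_apply, Pi.smul_apply, Pi.zero_apply,
        smul_eq_mul, Matrix.mulVec_sub, Matrix.mulVec_add] at a3 a4 ⊢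
      linarith

lemma Q_symmX' {N : ℕ} (A : Matrix (Fin N) (Fin N) ℝ) (hs : ∀ i j, A i j = A j i) :
    (Adiag A + Aneg A)ᵀ = Adiag A + Aneg A := by
  ext i j
  rcases eq_or_ne i j with rfl | h
  · simp [Adiag, Aneg]
  · simp [Matrix.transpose_apply, Adiag, Aneg, h, h.symm, hs j i]

lemma P_symmX' {N : ℕ} (A : Matrix (Fin N) (Fin N) ℝ) (hs : ∀ i j, A i j = A j i) :
    (Apos A)ᵀ = Apos A := by
  ext i j
  rcases eq_or_ne i j with rfl | h
  · simp [Apos]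
  · simp [Matrix.transpose_apply, Apos, h, h.symm, hs j i]

lemma tilde_symmX {N : ℕ} (A : Matrix (Fin N) (Fin N) ℝ) (hs : ∀ i j, A i j = A j i) :
    (tildeMat A).IsSymm := by
  rw [Matrix.IsSymm, tildeMat, Matrix.fromBlocks_transpose, Matrix.transpose_neg,
    Q_symmX' A hs, P_symmX' A hs]

lemma row_coreX {N : ℕ} (A : Matrix (Fin N) (Fin N) ℝ)
    (hs2 : ∀ i, ∑ j ∈ Finset.univ.filter (· ≠ i), |A i j| ≤ A i i) (i₀ : Fin N) :
    (∑ j, |(Adiag A + Aneg A) i₀ j|) + ∑ j, |Apos A i₀ j| ≤ 2 * A i₀ i₀ := by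
  have hsum := hs2 i₀
  rw [Finset.filter_ne'] at hsum
  have h0 : 0 ≤ A i₀ i₀ := le_trans (Finset.sum_nonneg fun _ _ => abs_nonneg _) hsum
  rw [← Finset.add_sum_erase _ _ (Finset.mem_univ i₀),
    ← Finset.add_sum_erase _ (fun j => |Apos A i₀ j|) (Finset.mem_univ i₀)]
  have e1 : |(Adiag A + Aneg A) i₀ i₀| = A i₀ i₀ := by
    simp [Adiag, Aneg, abs_of_nonneg h0]
  have e2 : |Apos A i₀ i₀| = 0 := by simp [Apos]
  rw [e1, e2]
  have e3 : (∑ j ∈ Finset.univ.erase i₀, |(Adiag A + Aneg A) i₀ j|)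
      + ∑ j ∈ Finset.univ.erase i₀, |Apos A i₀ j|
      = ∑ j ∈ Finset.univ.erase i₀, |A i₀ j| := by
    rw [← Finset.sum_add_distrib]
    apply Finset.sum_congr rfl
    intro k hk
    have hk' : i₀ ≠ k := Ne.symm (Finset.mem_erase.mp hk).1
    simp [Adiag, Aneg, Apos, if_neg hk', abs_min_add_abs_max]
  linarith

lemma tilde_rowX {N : ℕ} (A : Matrix (Fin N) (Fin N) ℝ)
    (hs2 : ∀ i, ∑ j ∈ Finset.univ.filter (· ≠ i), |A i j| ≤ A i i)
    (i : Fin N ⊕ Fin N) :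
    ∑ j ∈ Finset.univ.filter (· ≠ i), |tildeMat A i j| ≤ tildeMat A i i := by
  have h0 : ∀ i₀, 0 ≤ A i₀ i₀ := fun i₀ =>
    le_trans (Finset.sum_nonneg fun _ _ => abs_nonneg _) (hs2 i₀)
  rw [Finset.filter_ne', Finset.sum_erase_eq_sub (Finset.mem_univ _)]
  rcases i with i₀ | i₀ <;>
  · have htot : ∑ j : Fin N ⊕ Fin N, |tildeMat A (Sum.inl i₀) j|
        = (∑ j, |(Adiag A + Aneg A) i₀ j|) + ∑ j, |Apos A i₀ j| ∧
        ∑ j : Fin N ⊕ Fin N, |tildeMat A (Sum.inr i₀) j|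
        = (∑ j, |(Adiag A + Aneg A) i₀ j|) + ∑ j, |Apos A i₀ j| := by
      constructor <;>
      · rw [Fintype.sum_sum_type]
        simp only [tildeMat, Matrix.fromBlocks_apply₁₁, Matrix.fromBlocks_apply₁₂,
          Matrix.fromBlocks_apply₂₁, Matrix.fromBlocks_apply₂₂, Matrix.neg_apply, abs_neg]
        try ring
    have hdiag1 : |tildeMat A (Sum.inl i₀) (Sum.inl i₀)| = A i₀ i₀ := by
      simp [tildeMat, Adiag, Aneg, abs_of_nonneg (h0 i₀)]
    have hdiag2 : |tildeMat A (Sum.inr i₀) (Sum.inr i₀)| = A i₀ i₀ := by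
      simp [tildeMat, Adiag, Aneg, abs_of_nonneg (h0 i₀)]
    have hdd1 : tildeMat A (Sum.inl i₀) (Sum.inl i₀) = A i₀ i₀ := by
      simp [tildeMat, Adiag, Aneg]
    have hdd2 : tildeMat A (Sum.inr i₀) (Sum.inr i₀) = A i₀ i₀ := by
      simp [tildeMat, Adiag, Aneg]
    have := row_coreX A hs2 i₀
    first
    | (rw [htot.1, hdiag1, hdd1]; linarith)
    | (rw [htot.2, hdiag2, hdd2]; linarith)

lemma tilde_offdiagX {N : ℕ} (A : Matrix (Fin N) (Fin N) ℝ) :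
    ∀ i j : Fin N ⊕ Fin N, i ≠ j → tildeMat A i j ≤ 0 := by
  rintro (i | i) (j | j) hij
  · have h : i ≠ j := fun h => hij (h ▸ rfl)
    simp [tildeMat, Adiag, Aneg, if_neg h, min_le_right]
  · simp only [tildeMat, Matrix.fromBlocks_apply₁₂, Matrix.neg_apply, Apos, Matrix.of_apply]
    split_ifs <;> simp [le_max_right]
  · simp only [tildeMat, Matrix.fromBlocks_apply₂₁, Matrix.neg_apply, Apos, Matrix.of_apply]
    split_ifs <;> simp [le_max_right]
  · have h : i ≠ j := fun h => hij (h ▸ rfl)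
    simp [tildeMat, Adiag, Aneg, if_neg h, min_le_right]

/-- For a nonsingular irreducible SDD matrix `A` with at least one positive off-diagonal
entry, the matrix `Ã = [[A_d + A_n, −A_p], [−A_p, A_d + A_n]]` is SDD with all
off-diagonal entries non-positive; and if `a_ii = ∑_{j≠i} |a_ij|` for every `i`, then for
any `b` and any solution `y = (x₁; −x₂)` of `Ã y = (b; −b)` one has `x₁ + x₂ = 2A⁻¹b` and
`x₁ − x₂ ∈ span{𝟏}`; the solution set of `Ã y = (b; −b)` is
`{(x; −x) + c𝟏 : c ∈ ℝ}` with `x = A⁻¹b`, and `(x; −x)` is the unique solution orthogonal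
to the all-ones vector. -/
theorem tilde_SDD_and_solutions {N : ℕ} (A : Matrix (Fin N) (Fin N) ℝ)
    (hA : IsSDD A) (hirr : IsIrreducibleMat A) (hns : IsUnit A.det)
    (hpos : ∃ i j, i ≠ j ∧ 0 < A i j) :
    ((tildeMat A).IsSymm ∧
      ∀ i, ∑ j ∈ Finset.univ.filter (· ≠ i), |tildeMat A i j| ≤ tildeMat A i i) ∧
    (∀ i j, i ≠ j → tildeMat A i j ≤ 0) ∧
    ((∀ i, A i i = ∑ j ∈ Finset.univ.filter (· ≠ i), |A i j|) →
      ∀ b : Fin N → ℝ,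
        (∀ x₁ x₂ : Fin N → ℝ,
          tildeMat A *ᵥ Sum.elim x₁ (-x₂) = Sum.elim b (-b) →
            x₁ + x₂ = (2 : ℝ) • (A⁻¹ *ᵥ b) ∧
            ∃ c : ℝ, x₁ - x₂ = Function.const (Fin N) c) ∧
        (∀ y : Fin N ⊕ Fin N → ℝ,
          tildeMat A *ᵥ y = Sum.elim b (-b) ↔
            ∃ c : ℝ, y = Sum.elim (A⁻¹ *ᵥ b) (-(A⁻¹ *ᵥ b)) +
              Function.const (Fin N ⊕ Fin N) c) ∧
        (∀ y : Fin N ⊕ Fin N → ℝ,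
          (tildeMat A *ᵥ y = Sum.elim b (-b) ∧ ∑ i, y i = 0) ↔
            y = Sum.elim (A⁻¹ *ᵥ b) (-(A⁻¹ *ᵥ b)))) := by
  have hs : ∀ i j, A i j = A j i := fun i j =>
    (congrFun (congrFun hA.1 j) i : Aᵀ j i = A j i)
  refine ⟨⟨tilde_symmX A hs, tilde_rowX A hA.2⟩, tilde_offdiagX A, ?_⟩
  intro hEq b
  have hN : Nonempty (Fin N) := ⟨hpos.choose⟩
  have hNpos : 0 < N := hN.some.pos
  have hAinvb : A *ᵥ (A⁻¹ *ᵥ b) = b := by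
    rw [Matrix.mulVec_mulVec, Matrix.mul_nonsing_inv _ hns, Matrix.one_mulVec]
  have hinv : ∀ w : Fin N → ℝ, A⁻¹ *ᵥ (A *ᵥ w) = w := fun w => by
    rw [Matrix.mulVec_mulVec, Matrix.nonsing_inv_mul _ hns, Matrix.one_mulVec]
  set p := A⁻¹ *ᵥ b with hp
  have claim2 : ∀ y : Fin N ⊕ Fin N → ℝ,
      tildeMat A *ᵥ y = Sum.elim b (-b) ↔
        ∃ c : ℝ, y = Sum.elim p (-p) + Function.const (Fin N ⊕ Fin N) c := by
    intro y
    constructor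
    · intro h
      rw [← Sum.elim_comp_inl_inr y, system_iff] at h
      obtain ⟨h1, h2⟩ := h
      obtain ⟨d, hd⟩ := MmatX_ker A hN hirr hEq _ h2
      refine ⟨d / 2, ?_⟩
      have huv : y ∘ Sum.inl - y ∘ Sum.inr = (2 : ℝ) • p := by
        have := congrArg (fun w => A⁻¹ *ᵥ w) h1
        simpa [hinv, Matrix.mulVec_smul] using this
      funext i
      rcases i with i | i <;>
      · have a1 := congrFun huv i
        have a2 := congrFun hd i
        simp only [Pi.sub_apply, Pi.add_apply, Pi.smul_apply, Function.comp_apply,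
          smul_eq_mul, Function.const_apply, Sum.elim_inl, Sum.elim_inr, Pi.neg_apply] at a1 a2 ⊢
        linarith
    · rintro ⟨c, rfl⟩
      have hrep : Sum.elim p (-p) + Function.const (Fin N ⊕ Fin N) c
          = Sum.elim (p + Function.const (Fin N) c) (-p + Function.const (Fin N) c) := by
        funext i; rcases i with i | i <;> simp
      rw [hrep, system_iff]
      constructor
      · have e : (p + Function.const (Fin N) c) - (-p + Function.const (Fin N) c)
            = p + p := by funext i; simp; try ring
        rw [e, Matrix.mulVec_add, hAinvb, two_smul]
      · have e : (p + Function.const (Fin N) c) + (-p + Function.const (Fin N) c)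
            = Function.const (Fin N) (2 * c) := by funext i; simp; try ring
        rw [e]
        exact MmatX_const A hEq _
  refine ⟨?_, claim2, ?_⟩
  · intro x₁ x₂ h
    rw [system_iff] at h
    obtain ⟨h1, h2⟩ := h
    rw [sub_neg_eq_add] at h1
    constructor
    · have := congrArg (fun w => A⁻¹ *ᵥ w) h1
      simpa [hinv, Matrix.mulVec_smul] using this
    · have hx2 : x₁ + -x₂ = x₁ - x₂ := by funext i; simp [sub_eq_add_neg]
      rw [hx2] at h2
      exact MmatX_ker A hN hirr hEq _ h2
  · intro y
    constructor
    · rintro ⟨h, hsum⟩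
      obtain ⟨c, rfl⟩ := (claim2 y).mp h
      have hc : c = 0 := by
        rw [Fintype.sum_sum_type] at hsum
        simp only [Pi.add_apply, Sum.elim_inl, Sum.elim_inr, Function.const_apply,
          Pi.neg_apply, Finset.sum_add_distrib, Finset.sum_const, Finset.card_univ,
          Fintype.card_fin, nsmul_eq_mul, Finset.sum_neg_distrib] at hsum
        have : (N : ℝ) ≠ 0 := Nat.cast_ne_zero.mpr hNpos.ne'
        have h2 : (N : ℝ) * c = 0 := by linarith
        rcases mul_eq_zero.mp h2 with h' | h'
        · exact absurd h' this
        · exact h'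
      rw [hc]
      funext i; rcases i with i | i <;> simp
    · rintro rfl
      refine ⟨(claim2 _).mpr ⟨0, by funext i; rcases i with i | i <;> simp⟩, ?_⟩
      rw [Fintype.sum_sum_type]
      simp
end
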